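/- arXiv:0912.4207 — 5 statements merged into one kernel-verified Lean document; each statement's English description precedes it below -/
import Mathlib

section
/- Let r ≥ 3 with r ≠ 4, let V be a finite-dimensional real vector space, and let φ : Cl⁰(Q_r) → End(V) be a unital ℝ-algebra homomorphism. Set J_{ij} := φ(ι(e_i)·ι(e_j)). Then for all indices with i ≠ j, k ≠ l, and {i, j} ≠ {k, l} as unordered pairs, one has trace(J_{ij} ∘ J_{kl}) = 0; i.e. the endomorphisms J_{ij} (i < j) are pairwise orthogonal with respect to the trace form on End(V). -/
open CliffordAlgebra

/-- The quadratic form `Q(v) = -‖v‖²` on the Euclidean space `ℝ^r`. -/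
noncomputable def Qr (r : ℕ) : QuadraticForm ℝ (EuclideanSpace ℝ (Fin r)) :=
  -(LinearMap.BilinMap.toQuadraticMap (innerₗ (EuclideanSpace ℝ (Fin r))))

/-- The standard orthonormal basis vectors of `ℝ^r`. -/
noncomputable def stdB (r : ℕ) (i : Fin r) : EuclideanSpace ℝ (Fin r) :=
  EuclideanSpace.single i 1

lemma inner_stdB (r : ℕ) (i j : Fin r) :
    (inner ℝ (stdB r i) (stdB r j) : ℝ) = if i = j then 1 else 0 := by
  rw [stdB, stdB, EuclideanSpace.inner_single_left, EuclideanSpace.single_apply]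
  simp [eq_comm]

lemma Qr_stdB (r : ℕ) (i : Fin r) : Qr r (stdB r i) = -1 := by
  rw [Qr, QuadraticMap.neg_apply, LinearMap.BilinMap.toQuadraticMap_apply,
    innerₗ_apply_apply, inner_stdB]
  simp

lemma polar_stdB (r : ℕ) {i j : Fin r} (h : i ≠ j) :
    QuadraticMap.polar (Qr r) (stdB r i) (stdB r j) = 0 := by
  rw [QuadraticMap.polar]
  simp only [Qr, QuadraticMap.neg_apply, LinearMap.BilinMap.toQuadraticMap_apply,
    innerₗ_apply_apply]
  rw [inner_add_add_self, real_inner_comm (stdB r j) (stdB r i)]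
  simp only [inner_stdB, if_pos rfl, if_neg h, if_neg h.symm]
  ring

noncomputable def xv (r : ℕ) (c : Fin r) : CliffordAlgebra (Qr r) := ι (Qr r) (stdB r c)

lemma x_sq (r : ℕ) (c : Fin r) : xv r c * xv r c = -1 := by
  rw [xv, ι_sq_scalar, Qr_stdB, map_neg, map_one]

lemma x_anti {r : ℕ} {c d : Fin r} (h : c ≠ d) : xv r c * xv r d = -(xv r d * xv r c) := by
  have := ι_mul_ι_add_swap (Q := Qr r) (stdB r c) (stdB r d)
  rw [polar_stdB r h, map_zero, add_eq_zero_iff_eq_neg] at this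
  exact this

lemma x_bab {r : ℕ} {a b : Fin r} (hab : a ≠ b) :
    xv r b * (xv r a * xv r b) = xv r a := by
  rw [← mul_assoc, x_anti (Ne.symm hab), neg_mul, mul_assoc, x_sq, mul_neg_one, neg_neg]

noncomputable def sgn {r : ℕ} (a b c : Fin r) : ℝ := if c = a ∨ c = b then -1 else 1

lemma g_swap {r : ℕ} {a b : Fin r} (hab : a ≠ b) (c : Fin r) :
    (xv r a * xv r b) * xv r c = sgn a b c • (xv r c * (xv r a * xv r b)) := by
  rcases eq_or_ne c a with rfl | hca
  · rw [sgn, if_pos (Or.inl rfl), neg_one_smul]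
    rw [mul_assoc, x_anti (Ne.symm hab), mul_neg]
  rcases eq_or_ne c b with rfl | hcb
  · rw [sgn, if_pos (Or.inr rfl), neg_one_smul, x_bab hab, mul_assoc, x_sq, mul_neg_one]
  · rw [sgn, if_neg (by tauto), one_smul]
    conv_lhs => rw [mul_assoc, x_anti (Ne.symm hcb), mul_neg, ← mul_assoc,
      x_anti (Ne.symm hca), neg_mul, neg_neg, mul_assoc]

lemma swap_mul {A : Type*} [Ring A] [Module ℝ A] [SMulCommClass ℝ A A] [IsScalarTower ℝ A A]
    (g u v : A) (s t : ℝ) (hu : g * u = s • (u * g)) (hv : g * v = t • (v * g)) :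
    g * (u * v) = (s * t) • ((u * v) * g) := by
  rw [← mul_assoc, hu, smul_mul_assoc, mul_assoc, hv, mul_smul_comm, smul_smul, mul_assoc]

set_option maxHeartbeats 2000000 in
/-- For `r ≥ 3`, `r ≠ 4`, and a unital `ℝ`-algebra homomorphism `φ : Cl⁰(Q_r) → End(V)`
with `V` finite dimensional, the endomorphisms `J i j := φ (ι(e_i)·ι(e_j))` are pairwise
orthogonal with respect to the trace form: `tr (J i j ∘ J k l) = 0` whenever `i ≠ j`,
`k ≠ l` and `{i,j} ≠ {k,l}` as unordered pairs. -/
theorem statement1 {r : ℕ} (hr : 3 ≤ r) (hr4 : r ≠ 4)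
    (V : Type*) [AddCommGroup V] [Module ℝ V] [FiniteDimensional ℝ V]
    (φ : CliffordAlgebra.even (Qr r) →ₐ[ℝ] Module.End ℝ V)
    (J : Fin r → Fin r → Module.End ℝ V)
    (hJ : ∀ i j, J i j = φ ((even.ι (Qr r)).bilin (stdB r i) (stdB r j))) :
    ∀ i j k l : Fin r, i ≠ j → k ≠ l → ({i, j} : Finset (Fin r)) ≠ {k, l} →
      LinearMap.trace ℝ V (J i j * J k l) = 0 := by
  intro i j k l hij hkl hne
  -- find a suitable conjugating pair (a, b)
  obtain ⟨a, b, hab, hsgn⟩ :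
      ∃ a b : Fin r, a ≠ b ∧ sgn a b i * sgn a b j * (sgn a b k * sgn a b l) = -1 := by
    by_cases hk : k = i ∨ k = j <;> by_cases hl : l = i ∨ l = j
    · -- both k, l ∈ {i, j} : contradiction
      exfalso
      have hsub : ({k, l} : Finset (Fin r)) ⊆ {i, j} := by
        intro x hx
        simp only [Finset.mem_insert, Finset.mem_singleton] at hx ⊢
        rcases hx with rfl | rfl <;> tauto
      have hcard : ({i, j} : Finset (Fin r)).card ≤ ({k, l} : Finset (Fin r)).card := by
        rw [Finset.card_pair hij, Finset.card_pair hkl]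
      exact hne (Finset.eq_of_subset_of_card_le hsub hcard).symm
    · refine ⟨i, j, hij, ?_⟩
      rw [sgn, if_pos (Or.inl rfl), sgn, if_pos (Or.inr rfl), sgn, if_pos hk, sgn, if_neg hl]
      norm_num
    · refine ⟨i, j, hij, ?_⟩
      rw [sgn, if_pos (Or.inl rfl), sgn, if_pos (Or.inr rfl), sgn, if_neg hk, sgn, if_pos hl]
      norm_num
    · -- all four distinct; pick b outside
      push_neg at hk hl
      obtain ⟨hki, hkj⟩ := hk
      obtain ⟨hli, hlj⟩ := hl
      obtain ⟨b, hb⟩ : ∃ b, b ∉ ({i, j, k, l} : Finset (Fin r)) := by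
        by_contra h
        push_neg at h
        have huniv : ({i, j, k, l} : Finset (Fin r)) = Finset.univ :=
          Finset.eq_univ_iff_forall.2 h
        have hc := congrArg Finset.card huniv
        rw [Finset.card_univ, Fintype.card_fin] at hc
        rw [Finset.card_insert_of_notMem (by simp [hij, Ne.symm hki, Ne.symm hli]),
          Finset.card_insert_of_notMem (by simp [Ne.symm hkj, Ne.symm hlj]),
          Finset.card_pair hkl] at hc
        exact hr4 hc.symm
      simp only [Finset.mem_insert, Finset.mem_singleton, not_or] at hb
      obtain ⟨hbi, hbj, hbk, hbl⟩ := hb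
      refine ⟨i, b, Ne.symm hbi, ?_⟩
      rw [sgn, if_pos (Or.inl rfl), sgn, if_neg (by tauto), sgn, if_neg (by tauto),
        sgn, if_neg (by tauto)]
      norm_num
  -- the anticommutation in the Clifford algebra
  have hgX : (xv r a * xv r b) * ((xv r i * xv r j) * (xv r k * xv r l)) =
      -(((xv r i * xv r j) * (xv r k * xv r l)) * (xv r a * xv r b)) := by
    rw [swap_mul _ _ _ _ _
      (swap_mul _ _ _ _ _ (g_swap hab i) (g_swap hab j))
      (swap_mul _ _ _ _ _ (g_swap hab k) (g_swap hab l)), hsgn, neg_one_smul]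
  -- transfer to the even subalgebra
  have hcoe : ∀ c d, (((even.ι (Qr r)).bilin (stdB r c) (stdB r d) : even (Qr r)) :
      CliffordAlgebra (Qr r)) = xv r c * xv r d := fun c d => rfl
  have hGE : (even.ι (Qr r)).bilin (stdB r a) (stdB r b) *
      ((even.ι (Qr r)).bilin (stdB r i) (stdB r j) *
        (even.ι (Qr r)).bilin (stdB r k) (stdB r l)) =
      -((even.ι (Qr r)).bilin (stdB r i) (stdB r j) *
        (even.ι (Qr r)).bilin (stdB r k) (stdB r l) *
        (even.ι (Qr r)).bilin (stdB r a) (stdB r b)) := by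
    apply Subtype.ext
    rw [MulMemClass.coe_mul, MulMemClass.coe_mul, NegMemClass.coe_neg,
      MulMemClass.coe_mul, MulMemClass.coe_mul, hcoe, hcoe, hcoe]
    exact hgX
  have hG2 : (even.ι (Qr r)).bilin (stdB r a) (stdB r b) *
      (even.ι (Qr r)).bilin (stdB r a) (stdB r b) = -1 := by
    apply Subtype.ext
    rw [MulMemClass.coe_mul, hcoe, NegMemClass.coe_neg, OneMemClass.coe_one]
    rw [mul_assoc, x_bab hab, x_sq]
  -- apply φ
  have hMφ : J i j * J k l = φ ((even.ι (Qr r)).bilin (stdB r i) (stdB r j) *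
      (even.ι (Qr r)).bilin (stdB r k) (stdB r l)) := by
    rw [hJ i j, hJ k l, ← map_mul]
  have h1 : φ ((even.ι (Qr r)).bilin (stdB r a) (stdB r b)) * (J i j * J k l) =
      -((J i j * J k l) * φ ((even.ι (Qr r)).bilin (stdB r a) (stdB r b))) := by
    rw [hMφ, ← map_mul, ← map_mul, hGE, map_neg]
  have h2 : φ ((even.ι (Qr r)).bilin (stdB r a) (stdB r b)) *
      φ ((even.ι (Qr r)).bilin (stdB r a) (stdB r b)) = -1 := by
    rw [← map_mul, hG2, map_neg, map_one]
  set G : Module.End ℝ V := φ ((even.ι (Qr r)).bilin (stdB r a) (stdB r b)) with hG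
  set M : Module.End ℝ V := J i j * J k l with hM
  have e1 : G * (M * G) = M := by
    rw [← mul_assoc, h1, neg_mul, mul_assoc, h2, mul_neg_one, neg_neg]
  have e2 : (M * G) * G = -M := by rw [mul_assoc, h2, mul_neg_one]
  have htr := LinearMap.trace_mul_comm ℝ G (M * G)
  rw [e1, e2, map_neg] at htr
  linarith
end

section
/- Let V be a real inner product space, let A be an associative unital real algebra, and let φ : V × V → A be an alternating bilinear map (φ(u,v) = −φ(v,u)). Then the following are equivalent: (i) there exists a unital ℝ-algebra homomorphism F : Cl⁰(Q_V) → A such that F(ι(u)·ι(v)) = φ(u,v) − ⟨u,v⟩·1_A for all u, v ∈ V; (ii) φ(u,v)·φ(u,w) = φ(v,w) − ⟨v,w⟩·1_A for all u, v, w ∈ V with ‖u‖ = 1 and ⟨u,v⟩ = ⟨u,w⟩ = 0. -/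
open CliffordAlgebra RealInnerProductSpace

/-- The quadratic form `Q(v) = -‖v‖²` on a real inner product space `V`. -/
noncomputable def QV (V : Type*) [NormedAddCommGroup V] [InnerProductSpace ℝ V] :
    QuadraticForm ℝ V :=
  -(LinearMap.BilinMap.toQuadraticMap (innerₗ V))

lemma QV_apply {V : Type*} [NormedAddCommGroup V] [InnerProductSpace ℝ V] (v : V) :
    QV V v = -⟪v, v⟫ := by
  simp [QV, LinearMap.BilinMap.toQuadraticMap_apply]

lemma phi_self {V : Type*} [NormedAddCommGroup V] [InnerProductSpace ℝ V]
    {A : Type*} [Ring A] [Algebra ℝ A]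
    (φ : V →ₗ[ℝ] V →ₗ[ℝ] A) (halt : ∀ u v, φ u v = - φ v u) (v : V) : φ v v = 0 := by
  have h2 : φ v v + φ v v = 0 := by nth_rewrite 1 [halt v v]; simp
  calc φ v v = (2⁻¹ : ℝ) • (φ v v + φ v v) := by
        rw [← two_smul ℝ, smul_smul]; norm_num
    _ = 0 := by rw [h2, smul_zero]

/-- Scaled version of condition (ii). -/
lemma key_scaled {V : Type*} [NormedAddCommGroup V] [InnerProductSpace ℝ V]
    {A : Type*} [Ring A] [Algebra ℝ A]
    (φ : V →ₗ[ℝ] V →ₗ[ℝ] A)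
    (hii : ∀ u v w : V, ‖u‖ = 1 → ⟪u, v⟫ = 0 → ⟪u, w⟫ = 0 →
      φ u v * φ u w = φ v w - ⟪v, w⟫ • (1 : A))
    (u v w : V) (hv : ⟪u, v⟫ = 0) (hw : ⟪u, w⟫ = 0) :
    φ u v * φ u w = ⟪u, u⟫ • (φ v w - ⟪v, w⟫ • (1 : A)) := by
  rcases eq_or_ne u 0 with rfl | hu
  · simp
  · set u₀ : V := ‖u‖⁻¹ • u with hu₀
    have hn : ‖u‖ ≠ 0 := norm_ne_zero_iff.mpr hu
    have h1 : ‖u₀‖ = 1 := by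
      rw [hu₀, norm_smul]; simp [abs_of_nonneg (inv_nonneg.mpr (norm_nonneg u)),
        inv_mul_cancel₀ hn]
    have hv0 : ⟪u₀, v⟫ = 0 := by rw [hu₀, real_inner_smul_left, hv, mul_zero]
    have hw0 : ⟪u₀, w⟫ = 0 := by rw [hu₀, real_inner_smul_left, hw, mul_zero]
    have key := hii u₀ v w h1 hv0 hw0
    rw [hu₀] at key
    simp only [map_smul, LinearMap.smul_apply, smul_mul_assoc, mul_smul_comm,
      smul_smul] at key
    have : (‖u‖ ^ 2 : ℝ) • ((‖u‖⁻¹ * ‖u‖⁻¹) • (φ u v * φ u w)) =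
        (‖u‖ ^ 2 : ℝ) • (φ v w - ⟪v, w⟫ • (1 : A)) := by rw [key]
    rw [smul_smul] at this
    have h2 : (‖u‖ ^ 2 : ℝ) * (‖u‖⁻¹ * ‖u‖⁻¹) = 1 := by field_simp
    rw [h2, one_smul] at this
    rw [this, real_inner_self_eq_norm_sq]

/-- The `contract_mid` identity for vectors decomposed orthogonally to `b`. -/
lemma step {V : Type*} [NormedAddCommGroup V] [InnerProductSpace ℝ V]
    {A : Type*} [Ring A] [Algebra ℝ A]
    (φ : V →ₗ[ℝ] V →ₗ[ℝ] A) (halt : ∀ u v, φ u v = - φ v u)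
    (hii : ∀ u v w : V, ‖u‖ = 1 → ⟪u, v⟫ = 0 → ⟪u, w⟫ = 0 →
      φ u v * φ u w = φ v w - ⟪v, w⟫ • (1 : A))
    (a' b c' : V) (α γ : ℝ) (hba' : ⟪b, a'⟫ = 0) (hbc' : ⟪b, c'⟫ = 0) :
    (φ (a' + α • b) b - ⟪a' + α • b, b⟫ • (1 : A)) *
      (φ b (c' + γ • b) - ⟪b, c' + γ • b⟫ • (1 : A)) =
    (-⟪b, b⟫) • (φ (a' + α • b) (c' + γ • b) - ⟪a' + α • b, c' + γ • b⟫ • (1 : A)) := by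
  have ha'b : ⟪a', b⟫ = 0 := by rw [real_inner_comm]; exact hba'
  have hc'b : ⟪c', b⟫ = 0 := by rw [real_inner_comm]; exact hbc'
  have key : φ b a' * φ b c' = ⟪b, b⟫ • (φ a' c' - ⟪a', c'⟫ • (1 : A)) :=
    key_scaled φ hii b a' c' hba' hbc'
  have e1 : φ (a' + α • b) b - ⟪a' + α • b, b⟫ • (1 : A) =
      -(φ b a') - (α * ⟪b, b⟫) • (1 : A) := by
    simp only [map_add, map_smul, LinearMap.add_apply, LinearMap.smul_apply,
      inner_add_left, real_inner_smul_left, phi_self φ halt, smul_zero, add_zero,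
      ha'b, zero_add, halt a' b]
  have e2 : φ b (c' + γ • b) - ⟪b, c' + γ • b⟫ • (1 : A) =
      φ b c' - (γ * ⟪b, b⟫) • (1 : A) := by
    simp only [map_add, map_smul, inner_add_right, real_inner_smul_right,
      phi_self φ halt, smul_zero, add_zero, hbc', zero_add]
  have e3 : φ (a' + α • b) (c' + γ • b) - ⟪a' + α • b, c' + γ • b⟫ • (1 : A) =
      φ a' c' - γ • (φ b a') + α • (φ b c') -
        (⟪a', c'⟫ + α * γ * ⟪b, b⟫) • (1 : A) := by
    simp only [map_add, map_smul, LinearMap.add_apply, LinearMap.smul_apply,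
      inner_add_left, inner_add_right, real_inner_smul_left, real_inner_smul_right,
      phi_self φ halt, smul_zero, add_zero, hba', hbc', ha'b, hc'b,
      halt a' b, mul_zero, zero_add]
    match_scalars <;> ring
  rw [e1, e2, e3]
  simp only [sub_mul, neg_mul, mul_sub, smul_mul_assoc, mul_smul_comm, one_mul,
    mul_one, smul_smul]
  rw [key]
  match_scalars <;> ring

/-- Condition (ii) implies the full `contract_mid` identity. -/
lemma contract_mid_of_ii {V : Type*} [NormedAddCommGroup V] [InnerProductSpace ℝ V]
    {A : Type*} [Ring A] [Algebra ℝ A]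
    (φ : V →ₗ[ℝ] V →ₗ[ℝ] A) (halt : ∀ u v, φ u v = - φ v u)
    (hii : ∀ u v w : V, ‖u‖ = 1 → ⟪u, v⟫ = 0 → ⟪u, w⟫ = 0 →
      φ u v * φ u w = φ v w - ⟪v, w⟫ • (1 : A))
    (a b c : V) :
    (φ a b - ⟪a, b⟫ • (1 : A)) * (φ b c - ⟪b, c⟫ • (1 : A)) =
      (-⟪b, b⟫) • (φ a c - ⟪a, c⟫ • (1 : A)) := by
  rcases eq_or_ne b 0 with rfl | hb
  · simp
  · have hn : (⟪b, b⟫ : ℝ) ≠ 0 := inner_self_ne_zero.mpr hb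
    have hba' : ⟪b, a - (⟪b, a⟫ / ⟪b, b⟫) • b⟫ = 0 := by
      rw [inner_sub_right, real_inner_smul_right, div_mul_cancel₀ _ hn, sub_self]
    have hbc' : ⟪b, c - (⟪b, c⟫ / ⟪b, b⟫) • b⟫ = 0 := by
      rw [inner_sub_right, real_inner_smul_right, div_mul_cancel₀ _ hn, sub_self]
    have main := step φ halt hii (a - (⟪b, a⟫ / ⟪b, b⟫) • b) b
      (c - (⟪b, c⟫ / ⟪b, b⟫) • b) (⟪b, a⟫ / ⟪b, b⟫) (⟪b, c⟫ / ⟪b, b⟫) hba' hbc'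
    have ha : a - (⟪b, a⟫ / ⟪b, b⟫) • b + (⟪b, a⟫ / ⟪b, b⟫) • b = a := by abel
    have hc : c - (⟪b, c⟫ / ⟪b, b⟫) • b + (⟪b, c⟫ / ⟪b, b⟫) • b = c := by abel
    rw [ha, hc] at main
    exact main

/-- Universality property of the even Clifford algebra: an alternating bilinear map
`φ : V × V → A` extends to a unital algebra morphism `F : Cl⁰(Q_V) → A` with
`F(ι(u)·ι(v)) = φ(u,v) - ⟨u,v⟩·1` if and only if
`φ(u,v)·φ(u,w) = φ(v,w) - ⟨v,w⟩·1` for all `u,v,w` with `‖u‖ = 1` and `v,w ⊥ u`. -/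
theorem statement3 (V : Type*) [NormedAddCommGroup V] [InnerProductSpace ℝ V]
    (A : Type*) [Ring A] [Algebra ℝ A]
    (φ : V →ₗ[ℝ] V →ₗ[ℝ] A) (halt : ∀ u v, φ u v = - φ v u) :
    (∃ F : CliffordAlgebra.even (QV V) →ₐ[ℝ] A,
      ∀ u v : V, F ((even.ι (QV V)).bilin u v) = φ u v - ⟪u, v⟫ • (1 : A)) ↔
    (∀ u v w : V, ‖u‖ = 1 → ⟪u, v⟫ = 0 → ⟪u, w⟫ = 0 →
      φ u v * φ u w = φ v w - ⟪v, w⟫ • (1 : A)) := by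
  constructor
  · rintro ⟨F, hF⟩ u v w hu hv hw
    have hQu : QV V u = -1 := by
      rw [QV_apply, real_inner_self_eq_norm_sq, hu]; norm_num
    have key := (even.ι (QV V)).contract_mid v u w
    rw [hQu, neg_one_smul] at key
    have hkey := congrArg F key
    rw [map_mul, map_neg, hF, hF, hF] at hkey
    have hvu : ⟪v, u⟫ = 0 := by rw [real_inner_comm]; exact hv
    rw [hvu, hw, halt v u] at hkey
    simp only [zero_smul, sub_zero, neg_mul, neg_inj] at hkey
    exact hkey
  · intro hii
    set g : V →ₗ[ℝ] V →ₗ[ℝ] A :=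
      φ - (innerₗ V).compr₂ (Algebra.linearMap ℝ A) with hgd
    have hg : ∀ u v, g u v = φ u v - ⟪u, v⟫ • (1 : A) := fun u v => by
      simp [hgd, LinearMap.sub_apply, LinearMap.compr₂_apply,
        Algebra.algebraMap_eq_smul_one]
    let f : EvenHom (QV V) A :=
      { bilin := g
        contract := fun v => by
          rw [hg, phi_self φ halt, QV_apply, zero_sub]
          rw [Algebra.algebraMap_eq_smul_one, neg_smul]
        contract_mid := fun a b c => by
          rw [hg, hg, hg, QV_apply]
          exact contract_mid_of_ii φ halt hii a b c }
    refine ⟨even.lift (QV V) f, fun u v => ?_⟩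
    rw [even.lift_ι]
    exact hg u v
end

section
/- Let V be a real inner product space, A an associative unital real algebra, and φ : V × V → A an alternating bilinear map such that φ(u,v)·φ(u,w) = φ(v,w) − ⟨v,w⟩·1_A whenever ‖u‖ = 1 and ⟨u,v⟩ = ⟨u,w⟩ = 0. Then for ALL u, v, w ∈ V one has the polarized identity: φ(u,v)·φ(u,w) = ‖u‖²·φ(v,w) − ⟨u,v⟩·φ(u,w) − ⟨u,w⟩·φ(v,u) − (‖u‖²⟨v,w⟩ − ⟨u,v⟩⟨u,w⟩)·1_A. -/
open RealInnerProductSpace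

/-- If an alternating bilinear map `φ : V × V → A` satisfies
`φ(u,v)·φ(u,w) = φ(v,w) - ⟨v,w⟩·1` whenever `‖u‖ = 1` and `v, w ⊥ u`, then for ALL
`u, v, w ∈ V` the polarized identity holds:
`φ(u,v)·φ(u,w) = ‖u‖²·φ(v,w) - ⟨u,v⟩·φ(u,w) - ⟨u,w⟩·φ(v,u)
  - (‖u‖²⟨v,w⟩ - ⟨u,v⟩⟨u,w⟩)·1`. -/
theorem statement4 (V : Type*) [NormedAddCommGroup V] [InnerProductSpace ℝ V]
    (A : Type*) [Ring A] [Algebra ℝ A]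
    (φ : V →ₗ[ℝ] V →ₗ[ℝ] A) (halt : ∀ u v, φ u v = - φ v u)
    (h : ∀ u v w : V, ‖u‖ = 1 → ⟪u, v⟫ = 0 → ⟪u, w⟫ = 0 →
      φ u v * φ u w = φ v w - ⟪v, w⟫ • (1 : A)) :
    ∀ u v w : V,
      φ u v * φ u w =
        (‖u‖ ^ 2 : ℝ) • φ v w - ⟪u, v⟫ • φ u w - ⟪u, w⟫ • φ v u
          - ((‖u‖ ^ 2 : ℝ) * ⟪v, w⟫ - ⟪u, v⟫ * ⟪u, w⟫) • (1 : A) := by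
  have hzero : ∀ x : V, φ x x = 0 := by
    intro x
    have h1 : φ x x + φ x x = 0 := by
      nth_rewrite 1 [halt x x]; simp
    have h2 : (2:ℝ) • φ x x = 0 := by rw [two_smul]; exact h1
    have := congrArg (fun y => (2⁻¹:ℝ) • y) h2
    simpa [smul_smul] using this
  have h' : ∀ (u v w : V), u ≠ 0 → ⟪u,v⟫ = 0 → ⟪u,w⟫ = 0 →
      φ u v * φ u w = (‖u‖^2:ℝ) • (φ v w - ⟪v,w⟫ • (1:A)) := by
    intro u v w hu hv hw
    have hc0 : ‖u‖ ≠ 0 := norm_ne_zero_iff.mpr hu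
    have he : ‖(‖u‖⁻¹ • u)‖ = 1 := by
      rw [norm_smul]; simp [abs_of_nonneg, inv_mul_cancel₀ hc0]
    have hev : ⟪‖u‖⁻¹ • u, v⟫ = 0 := by rw [real_inner_smul_left, hv, mul_zero]
    have hew : ⟪‖u‖⁻¹ • u, w⟫ = 0 := by rw [real_inner_smul_left, hw, mul_zero]
    have key := h (‖u‖⁻¹ • u) v w he hev hew
    rw [map_smul, LinearMap.smul_apply, LinearMap.smul_apply, smul_mul_smul] at key
    have := congrArg (fun y => (‖u‖^2:ℝ) • y) key
    simp only [smul_smul] at this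
    rw [show (‖u‖^2:ℝ) * (‖u‖⁻¹ * ‖u‖⁻¹) = 1 by rw [pow_two]; field_simp, one_smul] at this
    exact this
  intro u v w
  by_cases hu : u = 0
  · simp [hu]
  have hc0 : (‖u‖^2:ℝ) ≠ 0 := pow_ne_zero 2 (norm_ne_zero_iff.mpr hu)
  set a := ⟪u,v⟫ / ‖u‖^2 with ha
  set b := ⟪u,w⟫ / ‖u‖^2 with hb
  have hv' : ⟪u, v - a • u⟫ = 0 := by
    rw [inner_sub_right, real_inner_smul_right, real_inner_self_eq_norm_sq, ha]
    field_simp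
    simp
  have hw' : ⟪u, w - b • u⟫ = 0 := by
    rw [inner_sub_right, real_inner_smul_right, real_inner_self_eq_norm_sq, hb]
    field_simp
    simp
  have key := h' u (v - a • u) (w - b • u) hu hv' hw'
  have hveq : v = (v - a • u) + a • u := by abel
  have hweq : w = (w - b • u) + b • u := by abel
  rw [hveq, hweq]
  set v' := v - a • u
  set w' := w - b • u
  simp only [map_add, map_smul, LinearMap.add_apply, LinearMap.smul_apply,
    inner_add_right, real_inner_smul_right, hzero, smul_zero, add_zero,
    real_inner_self_eq_norm_sq]
  rw [key]
  have hv'2 : ⟪v', u⟫ = 0 := by rw [real_inner_comm]; exact hv'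
  simp only [inner_add_left, real_inner_smul_left, hv', hw', hv'2, zero_add, add_zero,
    mul_zero, zero_mul, real_inner_self_eq_norm_sq]
  match_scalars
  all_goals simp only [ha, hb]
  all_goals field_simp
  all_goals ring
end

section
/- Let V be a real inner product space, A an associative unital real algebra, and φ : V × V → A an alternating bilinear map such that φ(u,v)·φ(u,w) = φ(v,w) − ⟨v,w⟩·1_A whenever ‖u‖ = 1 and ⟨u,v⟩ = ⟨u,w⟩ = 0. Define σ : V × V → A by σ(u,v) := φ(u,v) − ⟨u,v⟩·1_A. Then for all u, v, w ∈ V: (1) σ(u,v) + σ(v,u) = −2⟨u,v⟩·1_A, and (2) σ(v,u)·σ(u,w) = −‖u‖²·σ(v,w). -/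
open RealInnerProductSpace

/-- If an alternating bilinear map `φ : V × V → A` satisfies
`φ(u,v)·φ(u,w) = φ(v,w) - ⟨v,w⟩·1` whenever `‖u‖ = 1` and `v, w ⊥ u`, then the map
`σ(u,v) := φ(u,v) - ⟨u,v⟩·1` satisfies, for all `u, v, w ∈ V`:
(1) `σ(u,v) + σ(v,u) = -2⟨u,v⟩·1`, and (2) `σ(v,u)·σ(u,w) = -‖u‖²·σ(v,w)`. -/
theorem statement5 (V : Type*) [NormedAddCommGroup V] [InnerProductSpace ℝ V]
    (A : Type*) [Ring A] [Algebra ℝ A]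
    (φ : V →ₗ[ℝ] V →ₗ[ℝ] A) (halt : ∀ u v, φ u v = - φ v u)
    (h : ∀ u v w : V, ‖u‖ = 1 → ⟪u, v⟫ = 0 → ⟪u, w⟫ = 0 →
      φ u v * φ u w = φ v w - ⟪v, w⟫ • (1 : A))
    (σ : V → V → A) (hσ : ∀ u v, σ u v = φ u v - ⟪u, v⟫ • (1 : A)) :
    (∀ u v : V, σ u v + σ v u = (-2 * ⟪u, v⟫) • (1 : A)) ∧
    (∀ u v w : V, σ v u * σ u w = -((‖u‖ ^ 2 : ℝ) • σ v w)) := by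
  have hφuu : ∀ u : V, φ u u = 0 := by
    intro u
    have h2 : (2 : ℝ) • φ u u = 0 := by
      rw [two_smul]
      nth_rewrite 1 [halt u u]
      exact neg_add_cancel _
    have := congrArg (fun x => ((2 : ℝ)⁻¹) • x) h2
    simpa [smul_smul] using this
  -- the key case: ‖u‖ = 1
  have key : ∀ u v w : V, ‖u‖ = 1 → σ v u * σ u w = -(σ v w) := by
    intro u v w hu
    have huu : ⟪u, u⟫ = 1 := by
      rw [real_inner_self_eq_norm_sq, hu]; norm_num
    set a := ⟪u, v⟫ with ha
    set b := ⟪u, w⟫ with hb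
    set v' := v - a • u with hv'
    set w' := w - b • u with hw'
    have hov : ⟪u, v'⟫ = 0 := by
      simp [hv', inner_sub_right, real_inner_smul_right, huu, hu, ha]
    have how : ⟪u, w'⟫ = 0 := by
      simp [hw', inner_sub_right, real_inner_smul_right, huu, hu, hb]
    have hv'u : ⟪v', u⟫ = 0 := by rw [real_inner_comm]; exact hov
    have hw'u : ⟪w', u⟫ = 0 := by rw [real_inner_comm]; exact how
    have hxy := h u v' w' hu hov how
    set x := φ u v' with hx
    set y := φ u w' with hy
    set z := φ v' w' with hz
    set c := ⟪v', w'⟫ with hc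
    have hvdec : v = v' + a • u := by rw [hv']; abel
    have hwdec : w = w' + b • u := by rw [hw']; abel
    -- σ v u = -x - a • 1
    have e1 : σ v u = -x - a • (1 : A) := by
      rw [hσ, halt v u, hvdec]
      simp only [map_add, map_smul, hφuu, smul_zero, add_zero,
        inner_add_left, inner_add_right, real_inner_smul_left, real_inner_smul_right,
        huu, hov, hv'u, mul_one]
      rw [← hx]
      module
    have e2 : σ u w = y - b • (1 : A) := by
      rw [hσ, hwdec]
      simp only [map_add, map_smul, hφuu, smul_zero, add_zero,
        inner_add_left, inner_add_right, real_inner_smul_left, real_inner_smul_right,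
        huu, how, hw'u, mul_one]
      rw [← hy]
      module
    have e3 : σ v w = z - b • x + a • y - (c + a * b) • (1 : A) := by
      rw [hσ, hvdec, hwdec]
      have hvu : (φ v') u = -x := by rw [halt v' u, hx]
      simp only [map_add, map_smul, LinearMap.add_apply, LinearMap.smul_apply,
        hφuu, smul_zero, add_zero, inner_add_left, inner_add_right,
        real_inner_smul_left, real_inner_smul_right, huu, hov, how, hv'u, hw'u,
        mul_one, mul_zero, hvu]
      rw [← hy, ← hz, ← hc]
      module
    rw [e1, e2, e3]
    rw [sub_mul, mul_sub, mul_sub, neg_mul, hxy]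
    simp only [smul_mul_assoc, mul_smul_comm, one_mul, mul_one, smul_smul]
    module
  refine ⟨?_, ?_⟩
  · intro u v
    rw [hσ, hσ, halt u v, real_inner_comm v u]
    module
  · intro u v w
    by_cases hu : u = 0
    · subst hu
      have h1 : σ v 0 = 0 := by simp [hσ]
      simp [h1]
    · set r := ‖u‖ with hr
      have hr0 : r ≠ 0 := norm_ne_zero_iff.mpr hu
      set e := r⁻¹ • u with he
      have hne : ‖e‖ = 1 := norm_smul_inv_norm hu
      have hue : u = r • e := by
        rw [he, smul_smul, mul_inv_cancel₀ hr0, one_smul]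
      have s1 : σ v u = r • σ v e := by
        rw [hσ, hσ, hue, map_smul, real_inner_smul_right, smul_sub, smul_smul]
      have s2 : σ u w = r • σ e w := by
        rw [hσ, hσ, hue, map_smul, LinearMap.smul_apply, real_inner_smul_left,
          smul_sub, smul_smul]
      rw [s1, s2, smul_mul_assoc, mul_smul_comm, smul_smul, key e v w hne]
      rw [smul_neg, ← neg_smul, hr]
      rw [sq]
      module
end

section
/- Let W and E be finite-dimensional real inner product spaces, let (X_a)_{a=1,…,n} be an orthonormal basis of W, let φ : E × E → End(W) be an alternating bilinear map such that each φ(u,v) is skew-adjoint on W, and let ω : W × W → End(E) be the bilinear map determined by ⟨ω(X,Y)u, v⟩_E = −2⟨φ(u,v)X, Y⟩_W for all X, Y ∈ W and u, v ∈ E (so ω is −2 times the metric adjoint of φ). Then the following two conditions are equivalent: (i) for all u, v₁, v₂ ∈ E with ‖u‖ = 1 and v₁, v₂ ⊥ u, and all X, Y ∈ W: ⟨X,Y⟩⟨v₁,v₂⟩ = ¼ Σ_{a=1}^n ⟨v₁, ω(Y,X_a)u⟩⟨v₂, ω(X,X_a)u⟩ − ½⟨v₂, ω(X,Y)v₁⟩;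 (ii) for all u, v, w ∈ E with ‖u‖ = 1 and v, w ⊥ u: φ(u,v) ∘ φ(u,w) = φ(v,w) − ⟨v,w⟩·id_W. -/
open RealInnerProductSpace

/-- Let `W`, `E` be finite-dimensional real inner product spaces, `(X_a)` an orthonormal
basis of `W`, `φ : E × E → End(W)` an alternating bilinear map with skew-adjoint values,
and `ω : W × W → End(E)` determined by `⟨ω(X,Y)u, v⟩ = -2⟨φ(u,v)X, Y⟩`. Then the
curvature-constancy identity (i) holds for all unit `u` and `v₁, v₂ ⊥ u` if and only if
the even Clifford relation (ii) `φ(u,v)∘φ(u,w) = φ(v,w) - ⟨v,w⟩·id` holds for all unit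
`u` and `v, w ⊥ u`. -/
theorem statement11 {n : ℕ}
    (W : Type*) [NormedAddCommGroup W] [InnerProductSpace ℝ W] [FiniteDimensional ℝ W]
    (E : Type*) [NormedAddCommGroup E] [InnerProductSpace ℝ E] [FiniteDimensional ℝ E]
    (b : OrthonormalBasis (Fin n) ℝ W)
    (φ : E →ₗ[ℝ] E →ₗ[ℝ] Module.End ℝ W)
    (halt : ∀ u v, φ u v = - φ v u)
    (hskew : ∀ u v X Y, ⟪φ u v X, Y⟫ = -⟪X, φ u v Y⟫)
    (ω : W →ₗ[ℝ] W →ₗ[ℝ] (E →ₗ[ℝ] E))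
    (hω : ∀ X Y u v, ⟪ω X Y u, v⟫ = -2 * ⟪φ u v X, Y⟫) :
    (∀ u v₁ v₂ : E, ‖u‖ = 1 → ⟪u, v₁⟫ = 0 → ⟪u, v₂⟫ = 0 →
      ∀ X Y : W, ⟪X, Y⟫ * ⟪v₁, v₂⟫ =
        (1 / 4 : ℝ) * ∑ a : Fin n, ⟪v₁, ω Y (b a) u⟫ * ⟪v₂, ω X (b a) u⟫
          - (1 / 2 : ℝ) * ⟪v₂, ω X Y v₁⟫) ↔
    (∀ u v w : E, ‖u‖ = 1 → ⟪u, v⟫ = 0 → ⟪u, w⟫ = 0 →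
      φ u v * φ u w = φ v w - ⟪v, w⟫ • (1 : Module.End ℝ W)) := by
  -- Key simplification of the right-hand side of (i).
  have key : ∀ (u v₁ v₂ : E) (X Y : W),
      (1 / 4 : ℝ) * ∑ a : Fin n, ⟪v₁, ω Y (b a) u⟫ * ⟪v₂, ω X (b a) u⟫
        - (1 / 2 : ℝ) * ⟪v₂, ω X Y v₁⟫
      = -⟪φ u v₁ (φ u v₂ X), Y⟫ + ⟪φ v₁ v₂ X, Y⟫ := by
    intro u v₁ v₂ X Y
    have h1 : ∀ a : Fin n, ⟪v₁, ω Y (b a) u⟫ = -2 * ⟪φ u v₁ Y, b a⟫ := fun a => by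
      rw [real_inner_comm, hω]
    have h2 : ∀ a : Fin n, ⟪v₂, ω X (b a) u⟫ = -2 * ⟪φ u v₂ X, b a⟫ := fun a => by
      rw [real_inner_comm, hω]
    have hsum : ∑ a : Fin n, ⟪v₁, ω Y (b a) u⟫ * ⟪v₂, ω X (b a) u⟫
        = 4 * ⟪φ u v₁ Y, φ u v₂ X⟫ := by
      rw [← b.sum_inner_mul_inner (φ u v₁ Y) (φ u v₂ X), Finset.mul_sum]
      refine Finset.sum_congr rfl fun a _ => ?_
      rw [h1, h2, real_inner_comm (b a) (φ u v₂ X)]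
      ring
    have hswap : ⟪φ u v₁ Y, φ u v₂ X⟫ = -⟪φ u v₁ (φ u v₂ X), Y⟫ := by
      rw [hskew u v₁ (φ u v₂ X) Y, real_inner_comm]
      ring
    have hω2 : ⟪v₂, ω X Y v₁⟫ = -2 * ⟪φ v₁ v₂ X, Y⟫ := by
      rw [real_inner_comm, hω]
    rw [hsum, hω2, hswap]
    ring
  constructor
  · intro h u v w hu hv hw
    apply LinearMap.ext; intro X
    apply ext_inner_right ℝ; intro Y
    have h' := h u v w hu hv hw X Y
    rw [key] at h'
    simp only [Module.End.mul_apply, LinearMap.sub_apply, LinearMap.smul_apply,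
      Module.End.one_apply, inner_sub_left, real_inner_smul_left]
    linarith
  · intro h u v₁ v₂ hu h1 h2 X Y
    rw [key]
    have h' := LinearMap.congr_fun (h u v₁ v₂ hu h1 h2) X
    have h'' := congrArg (fun z : W => ⟪z, Y⟫) h'
    simp only [Module.End.mul_apply, LinearMap.sub_apply, LinearMap.smul_apply,
      Module.End.one_apply, inner_sub_left, real_inner_smul_left] at h''
    linarith
end
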